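/- arXiv:2601.20226 — 4 statements merged into one kernel-verified Lean document; each statement's English description precedes it below -/
import Mathlib

section
/- Fix x₁, x₂ ∈ ℝ. If Φ₂(x₂) > Φ₁(x₁) (i.e. the spread at zero transfer is strictly positive), then there exists q ∈ (0, q_M] with f(q; x₁, x₂) > 0; consequently sup_{q ∈ [0, q_M]} f(q; x₁, x₂) > 0 and every maximizer q* of f(·; x₁, x₂) over [0, q_M] satisfies q* > 0. -/
/-- If the spread at zero transfer is strictly positive, `Φ₂ x₂ > Φ₁ x₁`, then there is
`q ∈ (0, q_M]` with strictly positive revenue, the supremum of the revenue over `[0, q_M]`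
is strictly positive, and every maximizer over `[0, q_M]` is strictly positive. -/
theorem stmt_9
    (Γ₁ Γ₂ Φ₁ Φ₂ : ℝ → ℝ)
    (hΓ₁c : Continuous Γ₁) (hΓ₁a : StrictAnti Γ₁) (hΓ₁s : Function.Surjective Γ₁)
    (hΓ₂c : Continuous Γ₂) (hΓ₂a : StrictAnti Γ₂) (hΓ₂s : Function.Surjective Γ₂)
    (hΦ₁l : ∀ y, Γ₁ (Φ₁ y) = y) (hΦ₁r : ∀ p, Φ₁ (Γ₁ p) = p)
    (hΦ₂l : ∀ y, Γ₂ (Φ₂ y) = y) (hΦ₂r : ∀ p, Φ₂ (Γ₂ p) = p)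
    (q_M : ℝ) (hq_M : 0 < q_M) (x₁ x₂ : ℝ)
    (hspread : Φ₁ x₁ < Φ₂ x₂) :
    (∃ q ∈ Set.Ioc (0 : ℝ) q_M, 0 < q * (Φ₂ (x₂ + q) - Φ₁ (x₁ - q))) ∧
    0 < sSup ((fun q : ℝ => q * (Φ₂ (x₂ + q) - Φ₁ (x₁ - q))) '' Set.Icc (0 : ℝ) q_M) ∧
    (∀ qs ∈ Set.Icc (0 : ℝ) q_M,
      (∀ q ∈ Set.Icc (0 : ℝ) q_M,
        q * (Φ₂ (x₂ + q) - Φ₁ (x₁ - q)) ≤ qs * (Φ₂ (x₂ + qs) - Φ₁ (x₁ - qs))) →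
      0 < qs) := by
  -- Φ's are strictly antitone
  have hΦ₁a : StrictAnti Φ₁ := by
    intro a b hab
    have := hΓ₁a.lt_iff_gt (a := Φ₁ a) (b := Φ₁ b)
    rw [hΦ₁l, hΦ₁l] at this
    exact this.mp hab
  have hΦ₂a : StrictAnti Φ₂ := by
    intro a b hab
    have := hΓ₂a.lt_iff_gt (a := Φ₂ a) (b := Φ₂ b)
    rw [hΦ₂l, hΦ₂l] at this
    exact this.mp hab
  -- midpoint price
  set p : ℝ := (Φ₁ x₁ + Φ₂ x₂) / 2 with hp
  have hp1 : Φ₁ x₁ < p := by simp [hp]; linarith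
  have hp2 : p < Φ₂ x₂ := by simp [hp]; linarith
  have ha : 0 < Γ₂ p - x₂ := by
    have : Γ₂ (Φ₂ x₂) < Γ₂ p := hΓ₂a hp2
    rw [hΦ₂l] at this; linarith
  have hb : 0 < x₁ - Γ₁ p := by
    have : Γ₁ p < Γ₁ (Φ₁ x₁) := hΓ₁a hp1
    rw [hΦ₁l] at this; linarith
  set q : ℝ := min q_M (min (Γ₂ p - x₂) (x₁ - Γ₁ p) / 2) with hqdef
  have hq0 : 0 < q := by
    apply lt_min hq_M
    have := lt_min ha hb
    linarith [lt_min ha hb]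
  have hqM : q ≤ q_M := min_le_left _ _
  have hqa : q < Γ₂ p - x₂ := by
    have h1 : q ≤ min (Γ₂ p - x₂) (x₁ - Γ₁ p) / 2 := min_le_right _ _
    have h2 : min (Γ₂ p - x₂) (x₁ - Γ₁ p) ≤ Γ₂ p - x₂ := min_le_left _ _
    have h3 : 0 < min (Γ₂ p - x₂) (x₁ - Γ₁ p) := lt_min ha hb
    linarith
  have hqb : q < x₁ - Γ₁ p := by
    have h1 : q ≤ min (Γ₂ p - x₂) (x₁ - Γ₁ p) / 2 := min_le_right _ _
    have h2 : min (Γ₂ p - x₂) (x₁ - Γ₁ p) ≤ x₁ - Γ₁ p := min_le_right _ _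
    have h3 : 0 < min (Γ₂ p - x₂) (x₁ - Γ₁ p) := lt_min ha hb
    linarith
  have hP2 : p < Φ₂ (x₂ + q) := by
    have : Φ₂ (Γ₂ p) < Φ₂ (x₂ + q) := hΦ₂a (by linarith)
    rwa [hΦ₂r] at this
  have hP1 : Φ₁ (x₁ - q) < p := by
    have : Φ₁ (x₁ - q) < Φ₁ (Γ₁ p) := hΦ₁a (by linarith)
    rwa [hΦ₁r] at this
  have hfq : 0 < q * (Φ₂ (x₂ + q) - Φ₁ (x₁ - q)) :=
    mul_pos hq0 (by linarith)
  refine ⟨⟨q, ⟨hq0, hqM⟩, hfq⟩, ?_, ?_⟩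
  · -- sup positive: f(q) ≤ sSup via boundedness
    have hC : 0 < Φ₂ x₂ - Φ₁ x₁ := by linarith
    have hbdd : BddAbove ((fun q : ℝ => q * (Φ₂ (x₂ + q) - Φ₁ (x₁ - q))) '' Set.Icc (0 : ℝ) q_M) := by
      refine ⟨q_M * (Φ₂ x₂ - Φ₁ x₁), ?_⟩
      rintro y ⟨r, ⟨hr0, hrM⟩, rfl⟩
      have h2 : Φ₂ (x₂ + r) ≤ Φ₂ x₂ := hΦ₂a.antitone (by linarith)
      have h1 : Φ₁ x₁ ≤ Φ₁ (x₁ - r) := hΦ₁a.antitone (by linarith)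
      have hΔ : Φ₂ (x₂ + r) - Φ₁ (x₁ - r) ≤ Φ₂ x₂ - Φ₁ x₁ := by linarith
      calc r * (Φ₂ (x₂ + r) - Φ₁ (x₁ - r)) ≤ r * (Φ₂ x₂ - Φ₁ x₁) :=
            mul_le_mul_of_nonneg_left hΔ hr0
        _ ≤ q_M * (Φ₂ x₂ - Φ₁ x₁) := mul_le_mul_of_nonneg_right hrM hC.le
    have hmem : q * (Φ₂ (x₂ + q) - Φ₁ (x₁ - q)) ∈
        (fun q : ℝ => q * (Φ₂ (x₂ + q) - Φ₁ (x₁ - q))) '' Set.Icc (0 : ℝ) q_M :=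
      ⟨q, ⟨hq0.le, hqM⟩, rfl⟩
    exact lt_of_lt_of_le hfq (le_csSup hbdd hmem)
  · intro qs ⟨hqs0, hqsM⟩ hmax
    by_contra h
    push_neg at h
    have : qs = 0 := le_antisymm h hqs0
    have hle := hmax q ⟨hq0.le, hqM⟩
    rw [this] at hle
    simp at hle
    linarith
end

section
/- Fix x₁, x₂ ∈ ℝ. If q* ∈ (0, q_M) satisfies the first-order condition P₂(q*) − P₁(q*) = −q* · (1/Γ₂'(P₂(q*)) + 1/Γ₁'(P₁(q*))), then the realized spread is strictly positive, P₂(q*) − P₁(q*) > 0, and consequently the realized revenue is strictly positive, f(q*; x₁, x₂) = q* · (P₂(q*) − P₁(q*)) > 0. -/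
/-- If `q* ∈ (0, q_M)` satisfies the first-order condition, then the realized spread is
strictly positive and the realized revenue `f(q*; x₁, x₂)` is strictly positive. -/
theorem stmt_12
    (Γ₁ Γ₂ Φ₁ Φ₂ : ℝ → ℝ)
    (hΓ₁d : ContDiff ℝ 1 Γ₁) (hΓ₁' : ∀ p, deriv Γ₁ p < 0) (hΓ₁s : Function.Surjective Γ₁)
    (hΓ₂d : ContDiff ℝ 1 Γ₂) (hΓ₂' : ∀ p, deriv Γ₂ p < 0) (hΓ₂s : Function.Surjective Γ₂)
    (hΦ₁l : ∀ y, Γ₁ (Φ₁ y) = y) (hΦ₁r : ∀ p, Φ₁ (Γ₁ p) = p)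
    (hΦ₂l : ∀ y, Γ₂ (Φ₂ y) = y) (hΦ₂r : ∀ p, Φ₂ (Γ₂ p) = p)
    (q_M : ℝ) (hq_M : 0 < q_M) (x₁ x₂ : ℝ)
    (qs : ℝ) (hqs : qs ∈ Set.Ioo (0 : ℝ) q_M)
    (hFOC : Φ₂ (x₂ + qs) - Φ₁ (x₁ - qs)
      = -(qs * (1 / deriv Γ₂ (Φ₂ (x₂ + qs)) + 1 / deriv Γ₁ (Φ₁ (x₁ - qs))))) :
    0 < Φ₂ (x₂ + qs) - Φ₁ (x₁ - qs) ∧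
    0 < qs * (Φ₂ (x₂ + qs) - Φ₁ (x₁ - qs)) := by
  have h2 := hΓ₂' (Φ₂ (x₂ + qs))
  have h1 := hΓ₁' (Φ₁ (x₁ - qs))
  have hsum : 1 / deriv Γ₂ (Φ₂ (x₂ + qs)) + 1 / deriv Γ₁ (Φ₁ (x₁ - qs)) < 0 :=
    add_neg (one_div_neg.mpr h2) (one_div_neg.mpr h1)
  have hspread : 0 < Φ₂ (x₂ + qs) - Φ₁ (x₁ - qs) := by
    rw [hFOC]
    have := mul_pos hqs.1 (neg_pos.mpr hsum)
    linarith
  exact ⟨hspread, mul_pos hqs.1 hspread⟩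
end

section
/- (Supremum–integral exchange.) Let π₁ and π₂ be probability measures on ℝ that are absolutely continuous with respect to Lebesgue measure, and let μ = π₁ ⊗ π₂ on ℝ². Assume the envelope (x₁, x₂) ↦ sup_{q ∈ [0, q_M]} |f(q; x₁, x₂)| is μ-integrable. Then the supremum, over all Borel measurable policies q : ℝ² → [0, q_M], of the expected revenue ∫ f(q(x₁, x₂); x₁, x₂) dμ(x₁, x₂) equals the integral of the pointwise suprema, ∫ (sup_{q ∈ [0, q_M]} f(q; x₁, x₂)) dμ(x₁, x₂). -/
open MeasureTheory

lemma cont_of_inv (Γ Φ : ℝ → ℝ) (hΓa : StrictAnti Γ)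
    (hl : ∀ y, Γ (Φ y) = y) (hr : ∀ p, Φ (Γ p) = p) : Continuous Φ := by
  have hsurj : Function.Surjective (fun y => OrderDual.toDual (Φ y)) := fun p =>
    ⟨Γ (OrderDual.ofDual p), by simp [hr]⟩
  have hmono : StrictMono (fun y => OrderDual.toDual (Φ y)) := by
    intro a b hab
    rcases lt_trichotomy (Φ b) (Φ a) with h | h | h
    · exact h
    · exact absurd (by rw [← hl a, ← hl b, h]) hab.ne'
    · exact absurd (by rw [← hl a, ← hl b]; exact hΓa h) (not_lt.2 hab.le)
  have := (StrictMono.orderIsoOfSurjective _ hmono hsurj).continuous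
  rw [StrictMono.coe_orderIsoOfSurjective] at this
  exact continuous_ofDual.comp this


theorem aux_exchange (F : ℝ → ℝ × ℝ → ℝ)
    (hF : Continuous fun p : ℝ × (ℝ × ℝ) => F p.1 p.2)
    (hF0 : ∀ x, F 0 x = 0)
    (q_M : ℝ) (hq_M : 0 < q_M)
    (μ : Measure (ℝ × ℝ)) [IsFiniteMeasure μ]
    (henv : Integrable (fun x => sSup ((fun q => |F q x|) '' Set.Icc (0:ℝ) q_M)) μ) :
    sSup {r : ℝ | ∃ p : ℝ × ℝ → ℝ, Measurable p ∧ (∀ x, p x ∈ Set.Icc (0 : ℝ) q_M) ∧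
        r = ∫ x, F (p x) x ∂μ}
      = ∫ x, sSup ((fun q => F q x) '' Set.Icc (0:ℝ) q_M) ∂μ := by
  classical
  have hmem0 : (0:ℝ) ∈ Set.Icc (0:ℝ) q_M := ⟨le_refl _, hq_M.le⟩
  have hK : IsCompact (Set.Icc (0:ℝ) q_M) := isCompact_Icc
  set g : ℝ × ℝ → ℝ := fun x => sSup ((fun q => F q x) '' Set.Icc (0:ℝ) q_M) with hg
  set env : ℝ × ℝ → ℝ := fun x => sSup ((fun q => |F q x|) '' Set.Icc (0:ℝ) q_M) with henvdef
  have hcontx : ∀ x : ℝ × ℝ, Continuous fun q => F q x := fun x =>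
    hF.comp (continuous_id.prodMk continuous_const)
  have hbdd : ∀ x, BddAbove ((fun q => F q x) '' Set.Icc (0:ℝ) q_M) := fun x =>
    (hK.image (hcontx x)).bddAbove
  have hbddA : ∀ x, BddAbove ((fun q => |F q x|) '' Set.Icc (0:ℝ) q_M) := fun x =>
    (hK.image ((hcontx x).abs)).bddAbove
  have h_le_env : ∀ x, ∀ q ∈ Set.Icc (0:ℝ) q_M, |F q x| ≤ env x := fun x q hq =>
    le_csSup (hbddA x) ⟨q, hq, rfl⟩
  have henv_nonneg : ∀ x, 0 ≤ env x := fun x =>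
    (abs_nonneg _).trans (h_le_env x 0 hmem0)
  have hfg : ∀ x, ∀ q ∈ Set.Icc (0:ℝ) q_M, F q x ≤ g x := fun x q hq =>
    le_csSup (hbdd x) ⟨q, hq, rfl⟩
  have hg_le_env : ∀ x, g x ≤ env x := fun x => by
    refine csSup_le (⟨F 0 x, 0, hmem0, rfl⟩) ?_
    rintro y ⟨q, hq, rfl⟩
    exact (le_abs_self _).trans (h_le_env x q hq)
  -- measurability/integrability for a policy
  have hmeas_pol : ∀ p : ℝ × ℝ → ℝ, Measurable p → Measurable fun x => F (p x) x := by
    intro p hp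
    exact hF.measurable.comp (hp.prodMk measurable_id)
  have hint_pol : ∀ p : ℝ × ℝ → ℝ, Measurable p → (∀ x, p x ∈ Set.Icc (0:ℝ) q_M) →
      Integrable (fun x => F (p x) x) μ := by
    intro p hp hpI
    refine henv.mono (hmeas_pol p hp).aestronglyMeasurable (ae_of_all _ fun x => ?_)
    rw [Real.norm_eq_abs, Real.norm_eq_abs, abs_of_nonneg (henv_nonneg x)]
    exact h_le_env x (p x) (hpI x)
  -- dense sequence in Icc
  haveI : Nonempty (Set.Icc (0:ℝ) q_M) := ⟨⟨0, hmem0⟩⟩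
  set u : ℕ → ℝ := fun n => (TopologicalSpace.denseSeq (Set.Icc (0:ℝ) q_M) n : ℝ) with hudef
  have hu : ∀ n, u n ∈ Set.Icc (0:ℝ) q_M := fun n =>
    (TopologicalSpace.denseSeq (Set.Icc (0:ℝ) q_M) n).2
  have hdense : Set.Icc (0:ℝ) q_M ⊆ closure (Set.range u) := by
    intro q hq
    have h1 : (⟨q, hq⟩ : Set.Icc (0:ℝ) q_M) ∈
        closure (Set.range (TopologicalSpace.denseSeq (Set.Icc (0:ℝ) q_M))) := by
      rw [(TopologicalSpace.denseRange_denseSeq (Set.Icc (0:ℝ) q_M)).closure_range]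
      trivial
    have h2 := Set.mem_image_of_mem Subtype.val h1
    have h3 := (image_closure_subset_closure_image continuous_subtype_val) h2
    have h4 : Subtype.val '' Set.range (TopologicalSpace.denseSeq (Set.Icc (0:ℝ) q_M))
        = Set.range u := by
      rw [← Set.range_comp]; rfl
    rwa [h4] at h3
  -- finite partial maxima
  have hrne : ∀ n : ℕ, (Finset.range (n+1)).Nonempty := fun n => ⟨0, by simp⟩
  set G : ℕ → ℝ × ℝ → ℝ := fun n x => (Finset.range (n+1)).sup' (hrne n) (fun k => F (u k) x)
    with hGdef
  have hGle : ∀ n x, G n x ≤ g x := fun n x =>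
    Finset.sup'_le _ _ fun k _ => hfg x (u k) (hu k)
  have hleG : ∀ n x, ∀ k ∈ Finset.range (n+1), F (u k) x ≤ G n x := fun n x k hk =>
    Finset.le_sup' (fun k => F (u k) x) hk
  have hGmono : ∀ x, Monotone fun n => G n x := by
    intro x n m hnm
    exact Finset.sup'_mono _ (Finset.range_subset_range.2 (by omega)) (hrne n)
  -- pointwise convergence G n x → g x
  have htend : ∀ x, Filter.Tendsto (fun n => G n x) Filter.atTop (nhds (g x)) := by
    intro x
    have hbddr : BddAbove (Set.range fun n => G n x) :=
      ⟨g x, by rintro y ⟨n, rfl⟩; exact hGle n x⟩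
    have h1 := tendsto_atTop_ciSup (hGmono x) hbddr
    have hLg : (⨆ n, G n x) = g x := by
      apply le_antisymm (ciSup_le fun n => hGle n x)
      obtain ⟨q₀, hq₀, hq₀max⟩ := hK.exists_isMaxOn ⟨0, hmem0⟩ (hcontx x).continuousOn
      have hgle : g x ≤ F q₀ x := csSup_le ⟨F 0 x, 0, hmem0, rfl⟩
        (by rintro y ⟨q, hq, rfl⟩; exact hq₀max hq)
      refine hgle.trans ?_
      have hclosed : IsClosed {q : ℝ | F q x ≤ ⨆ n, G n x} :=
        isClosed_le (hcontx x) continuous_const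
      have hsub : Set.range u ⊆ {q : ℝ | F q x ≤ ⨆ n, G n x} := by
        rintro _ ⟨n, rfl⟩
        exact le_ciSup_of_le hbddr n (hleG n x n (by simp))
      exact (closure_minimal hsub hclosed) (hdense hq₀)
    rwa [hLg] at h1
  -- measurable argmax policies for the finite maxima
  have hpol : ∀ n : ℕ, ∃ p : ℝ × ℝ → ℝ, Measurable p ∧ (∀ x, p x ∈ Set.Icc (0:ℝ) q_M) ∧
      ∀ x, F (p x) x = G n x := by
    intro n
    induction n with
    | zero =>
      refine ⟨fun _ => u 0, measurable_const, fun _ => hu 0, fun x => ?_⟩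
      simp [hGdef]
    | succ n ih =>
      obtain ⟨p, hp, hpI, hpE⟩ := ih
      refine ⟨fun x => if F (u (n+1)) x ≤ F (p x) x then p x else u (n+1),
        Measurable.ite (measurableSet_le (hmeas_pol _ measurable_const) (hmeas_pol p hp))
          hp measurable_const, fun x => ?_, fun x => ?_⟩
      · by_cases h : F (u (n+1)) x ≤ F (p x) x <;> simp [h, hpI x, hu (n+1)]
      · show F (if F (u (n+1)) x ≤ F (p x) x then p x else u (n+1)) x = G (n+1) x
        have hstep : G (n+1) x = max (F (u (n+1)) x) (G n x) := by
          have : Finset.range (n+1+1) = insert (n+1) (Finset.range (n+1)) := by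
            rw [Finset.range_add_one]
          simp only [hGdef, this, Finset.sup'_insert (H := hrne n)]
        by_cases h : F (u (n+1)) x ≤ F (p x) x
        · rw [if_pos h, hpE x, hstep, max_eq_right (by rw [← hpE x]; exact h)]
        · rw [if_neg h, hstep, max_eq_left (by rw [← hpE x]; exact (not_le.1 h).le)]
  have hGmeas : ∀ n, Measurable (G n) := by
    intro n
    obtain ⟨p, hp, _, hpE⟩ := hpol n
    have h1 : (fun x => F (p x) x) = G n := funext hpE
    exact h1 ▸ hmeas_pol p hp
  have hGint : ∀ n, Integrable (G n) μ := by
    intro n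
    obtain ⟨p, hp, hpI, hpE⟩ := hpol n
    have h1 : (fun x => F (p x) x) = G n := funext hpE
    exact h1 ▸ hint_pol p hp hpI
  have hgmeas : Measurable g :=
    measurable_of_tendsto_metrizable hGmeas (tendsto_pi_nhds.2 htend)
  have hg_nonneg : ∀ x, 0 ≤ g x := fun x => (hF0 x).symm.le.trans (hfg x 0 hmem0)
  have hgint : Integrable g μ := by
    refine henv.mono hgmeas.aestronglyMeasurable (ae_of_all _ fun x => ?_)
    rw [Real.norm_eq_abs, Real.norm_eq_abs, abs_of_nonneg (hg_nonneg x),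
      abs_of_nonneg (henv_nonneg x)]
    exact hg_le_env x
  have hub : ∀ r ∈ {r : ℝ | ∃ p : ℝ × ℝ → ℝ, Measurable p ∧
      (∀ x, p x ∈ Set.Icc (0 : ℝ) q_M) ∧ r = ∫ x, F (p x) x ∂μ}, r ≤ ∫ x, g x ∂μ := by
    rintro r ⟨p, hp, hpI, rfl⟩
    exact integral_mono (hint_pol p hp hpI) hgint fun x => hfg x (p x) (hpI x)
  have hne_set : (∫ x, F ((fun _ => (0:ℝ)) x) x ∂μ) ∈ {r : ℝ | ∃ p : ℝ × ℝ → ℝ, Measurable p ∧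
      (∀ x, p x ∈ Set.Icc (0 : ℝ) q_M) ∧ r = ∫ x, F (p x) x ∂μ} :=
    ⟨fun _ => 0, measurable_const, fun _ => hmem0, rfl⟩
  apply le_antisymm
  · exact csSup_le ⟨_, hne_set⟩ hub
  · have hTend : Filter.Tendsto (fun n => ∫ x, G n x ∂μ) Filter.atTop
        (nhds (∫ x, g x ∂μ)) := by
      refine tendsto_integral_of_dominated_convergence env
        (fun n => (hGmeas n).aestronglyMeasurable) henv
        (fun n => ae_of_all _ fun x => ?_) (ae_of_all _ htend)
      rw [Real.norm_eq_abs]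
      refine abs_le.2 ⟨?_, (hGle n x).trans (hg_le_env x)⟩
      have h1 := (abs_le.1 (h_le_env x (u 0) (hu 0))).1
      have h2 := hleG n x 0 (by simp)
      linarith
    refine le_of_tendsto hTend (Filter.Eventually.of_forall fun n => ?_)
    obtain ⟨p, hp, hpI, hpE⟩ := hpol n
    refine le_csSup ⟨∫ x, g x ∂μ, hub⟩ ⟨p, hp, hpI, ?_⟩
    exact integral_congr_ae (ae_of_all _ fun x => (hpE x).symm)



open MeasureTheory

/-- Supremum–integral exchange: for `μ = π₁ ⊗ π₂` with `π₁, π₂` absolutely continuous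
probability measures and an integrable envelope, the supremum over Borel measurable
policies `q : ℝ² → [0, q_M]` of the expected revenue equals the integral of the pointwise
suprema of the revenue. -/
theorem stmt_15
    (Γ₁ Γ₂ Φ₁ Φ₂ : ℝ → ℝ)
    (hΓ₁c : Continuous Γ₁) (hΓ₁a : StrictAnti Γ₁) (hΓ₁s : Function.Surjective Γ₁)
    (hΓ₂c : Continuous Γ₂) (hΓ₂a : StrictAnti Γ₂) (hΓ₂s : Function.Surjective Γ₂)
    (hΦ₁l : ∀ y, Γ₁ (Φ₁ y) = y) (hΦ₁r : ∀ p, Φ₁ (Γ₁ p) = p)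
    (hΦ₂l : ∀ y, Γ₂ (Φ₂ y) = y) (hΦ₂r : ∀ p, Φ₂ (Γ₂ p) = p)
    (q_M : ℝ) (hq_M : 0 < q_M)
    (π₁ π₂ : Measure ℝ) [IsProbabilityMeasure π₁] [IsProbabilityMeasure π₂]
    (hπ₁ : π₁ ≪ volume) (hπ₂ : π₂ ≪ volume)
    (henv : Integrable
      (fun x : ℝ × ℝ =>
        sSup ((fun q : ℝ => |q * (Φ₂ (x.2 + q) - Φ₁ (x.1 - q))|) '' Set.Icc (0 : ℝ) q_M))
      (π₁.prod π₂)) :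
    sSup {r : ℝ | ∃ p : ℝ × ℝ → ℝ, Measurable p ∧ (∀ x, p x ∈ Set.Icc (0 : ℝ) q_M) ∧
        r = ∫ x, p x * (Φ₂ (x.2 + p x) - Φ₁ (x.1 - p x)) ∂(π₁.prod π₂)}
      = ∫ x, sSup ((fun q : ℝ => q * (Φ₂ (x.2 + q) - Φ₁ (x.1 - q))) '' Set.Icc (0 : ℝ) q_M)
          ∂(π₁.prod π₂) := by
  have hΦ₁cont : Continuous Φ₁ := cont_of_inv Γ₁ Φ₁ hΓ₁a hΦ₁l hΦ₁r
  have hΦ₂cont : Continuous Φ₂ := cont_of_inv Γ₂ Φ₂ hΓ₂a hΦ₂l hΦ₂r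
  have hF : Continuous fun p : ℝ × (ℝ × ℝ) =>
      p.1 * (Φ₂ (p.2.2 + p.1) - Φ₁ (p.2.1 - p.1)) :=
    continuous_fst.mul
      ((hΦ₂cont.comp (continuous_snd.snd.add continuous_fst)).sub
        (hΦ₁cont.comp (continuous_snd.fst.sub continuous_fst)))
  exact aux_exchange (fun q x => q * (Φ₂ (x.2 + q) - Φ₁ (x.1 - q))) hF
    (fun x => zero_mul _) q_M hq_M (π₁.prod π₂) henv
end

section
/- (Existence of an optimal storage policy.) Let π₁ and π₂ be probability measures on ℝ that are absolutely continuous with respect to Lebesgue measure, and let μ = π₁ ⊗ π₂ on ℝ². Assume the envelope (x₁, x₂) ↦ sup_{q ∈ [0, q_M]} |f(q; x₁, x₂)| is μ-integrable. Then there exists a Borel measurable policy q* : ℝ² → [0, q_M] such that for μ-almost every (x₁, x₂), f(q*(x₁, x₂); x₁, x₂) = sup_{q ∈ [0, q_M]} f(q; x₁, x₂); in particular, ∫ f(q*(x₁, x₂); x₁, x₂) dμ ≥ ∫ f(q(x₁, x₂); x₁, x₂) dμ for every Borel measurable policy q : ℝ² → [0, q_M]. -/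
open MeasureTheory

lemma aux_cont_inv (Γ Φ : ℝ → ℝ) (hA : StrictAnti Γ) (hS : Function.Surjective Γ)
    (hr : ∀ p, Φ (Γ p) = p) : Continuous Φ := by
  have hanti : StrictAnti Φ := by
    intro a b hab
    obtain ⟨pa, rfl⟩ := hS a
    obtain ⟨pb, rfl⟩ := hS b
    rw [hr, hr]
    exact hA.lt_iff_gt.mp hab
  have hsurj : Function.Surjective Φ := fun p => ⟨Γ p, hr p⟩
  have hmono : StrictMono fun y => -Φ y := fun a b h => neg_lt_neg (hanti h)
  have hsurj2 : Function.Surjective fun y => -Φ y := by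
    intro p
    obtain ⟨y, hy⟩ := hsurj (-p)
    exact ⟨y, by simp [hy]⟩
  have h := (StrictMono.orderIsoOfSurjective _ hmono hsurj2).continuous
  rw [StrictMono.coe_orderIsoOfSurjective] at h
  simpa using (continuous_neg_iff.mp h)

lemma aux_sSup_eq (G : ℝ → ℝ × ℝ → ℝ) (hG : Continuous fun z : ℝ × (ℝ × ℝ) => G z.1 z.2)
    (c : ℝ) (hc : 0 ≤ c) (x : ℝ × ℝ) :
    sSup ((fun q => G q x) '' Set.Icc 0 c) = ⨆ r : ℚ, G (min (max (r : ℝ) 0) c) x := by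
  have hGx : Continuous fun q => G q x :=
    hG.comp (continuous_id.prodMk continuous_const)
  have hne : (Set.Icc (0:ℝ) c).Nonempty := Set.nonempty_Icc.mpr hc
  have bdd : BddAbove ((fun q => G q x) '' Set.Icc 0 c) :=
    isCompact_Icc.bddAbove_image hGx.continuousOn
  have hcl : ∀ r : ℚ, min (max (r : ℝ) 0) c ∈ Set.Icc (0:ℝ) c :=
    fun r => ⟨le_min (le_max_right _ _) hc, min_le_right _ _⟩
  have bdd' : BddAbove (Set.range fun r : ℚ => G (min (max (r : ℝ) 0) c) x) := by
    refine bdd.mono ?_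
    rintro _ ⟨r, rfl⟩
    exact ⟨_, hcl r, rfl⟩
  refine le_antisymm (csSup_le (hne.image _) ?_) (ciSup_le fun r => le_csSup bdd ⟨_, hcl r, rfl⟩)
  rintro _ ⟨q, hq, rfl⟩
  obtain ⟨u, hmem, hu⟩ := mem_closure_iff_seq_limit.mp (Rat.denseRange_cast (𝕜 := ℝ) q)
  choose rs hrs using hmem
  have hclamp : Filter.Tendsto (fun n => min (max (u n) 0) c) Filter.atTop (nhds q) := by
    have : Filter.Tendsto (fun n => min (max (u n) 0) c) Filter.atTop
        (nhds (min (max q 0) c)) :=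
      ((hu.max tendsto_const_nhds).min tendsto_const_nhds)
    rwa [max_eq_left hq.1, min_eq_left hq.2] at this
  have htend : Filter.Tendsto (fun n => G (min (max (u n) 0) c) x) Filter.atTop
      (nhds (G q x)) := (hGx.tendsto q).comp hclamp
  refine le_of_tendsto' htend fun n => ?_
  have : G (min (max (u n) 0) c) x = G (min (max ((rs n : ℝ)) 0) c) x := by rw [hrs n]
  rw [this]
  exact le_ciSup bdd' (rs n)

lemma aux_meas (G : ℝ → ℝ × ℝ → ℝ) (hG : Continuous fun z : ℝ × (ℝ × ℝ) => G z.1 z.2)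
    (c : ℝ) (hc : 0 ≤ c) :
    Measurable fun x => sSup ((fun q => G q x) '' Set.Icc 0 c) := by
  have : (fun x => sSup ((fun q => G q x) '' Set.Icc 0 c))
      = fun x => ⨆ r : ℚ, G (min (max (r : ℝ) 0) c) x :=
    funext fun x => aux_sSup_eq G hG c hc x
  rw [this]
  exact Measurable.iSup fun r =>
    (hG.comp (continuous_const.prodMk continuous_id)).measurable

/-- Existence of an optimal storage policy: there is a Borel measurable policy
`q* : ℝ² → [0, q_M]` attaining, `μ`-a.e., the pointwise supremum of the revenue; in
particular its expected revenue dominates that of every Borel measurable policy. -/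
theorem stmt_16
    (Γ₁ Γ₂ Φ₁ Φ₂ : ℝ → ℝ)
    (hΓ₁c : Continuous Γ₁) (hΓ₁a : StrictAnti Γ₁) (hΓ₁s : Function.Surjective Γ₁)
    (hΓ₂c : Continuous Γ₂) (hΓ₂a : StrictAnti Γ₂) (hΓ₂s : Function.Surjective Γ₂)
    (hΦ₁l : ∀ y, Γ₁ (Φ₁ y) = y) (hΦ₁r : ∀ p, Φ₁ (Γ₁ p) = p)
    (hΦ₂l : ∀ y, Γ₂ (Φ₂ y) = y) (hΦ₂r : ∀ p, Φ₂ (Γ₂ p) = p)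
    (q_M : ℝ) (hq_M : 0 < q_M)
    (π₁ π₂ : Measure ℝ) [IsProbabilityMeasure π₁] [IsProbabilityMeasure π₂]
    (hπ₁ : π₁ ≪ volume) (hπ₂ : π₂ ≪ volume)
    (henv : Integrable
      (fun x : ℝ × ℝ =>
        sSup ((fun q : ℝ => |q * (Φ₂ (x.2 + q) - Φ₁ (x.1 - q))|) '' Set.Icc (0 : ℝ) q_M))
      (π₁.prod π₂)) :
    ∃ ps : ℝ × ℝ → ℝ, Measurable ps ∧ (∀ x, ps x ∈ Set.Icc (0 : ℝ) q_M) ∧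
      (∀ᵐ x ∂(π₁.prod π₂),
        ps x * (Φ₂ (x.2 + ps x) - Φ₁ (x.1 - ps x))
          = sSup ((fun q : ℝ => q * (Φ₂ (x.2 + q) - Φ₁ (x.1 - q))) '' Set.Icc (0 : ℝ) q_M)) ∧
      (∀ p : ℝ × ℝ → ℝ, Measurable p → (∀ x, p x ∈ Set.Icc (0 : ℝ) q_M) →
        ∫ x, p x * (Φ₂ (x.2 + p x) - Φ₁ (x.1 - p x)) ∂(π₁.prod π₂)
          ≤ ∫ x, ps x * (Φ₂ (x.2 + ps x) - Φ₁ (x.1 - ps x)) ∂(π₁.prod π₂)) := by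
  classical
  have hΦ₁c' : Continuous Φ₁ := aux_cont_inv Γ₁ Φ₁ hΓ₁a hΓ₁s hΦ₁r
  have hΦ₂c' : Continuous Φ₂ := aux_cont_inv Γ₂ Φ₂ hΓ₂a hΓ₂s hΦ₂r
  set G : ℝ → ℝ × ℝ → ℝ := fun q x => q * (Φ₂ (x.2 + q) - Φ₁ (x.1 - q)) with hGdef
  have hGc : Continuous fun z : ℝ × (ℝ × ℝ) => G z.1 z.2 :=
    continuous_fst.mul
      ((hΦ₂c'.comp (continuous_snd.snd.add continuous_fst)).sub
        (hΦ₁c'.comp (continuous_snd.fst.sub continuous_fst)))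
  have hGx_cont : ∀ x : ℝ × ℝ, Continuous fun q => G q x :=
    fun x => hGc.comp (continuous_id.prodMk continuous_const)
  set M : ℝ × ℝ → ℝ := fun x => sSup ((fun q => G q x) '' Set.Icc 0 q_M) with hMdef
  have hMmeas : Measurable M := aux_meas G hGc q_M hq_M.le
  have bdd : ∀ x, BddAbove ((fun q => G q x) '' Set.Icc 0 q_M) :=
    fun x => isCompact_Icc.bddAbove_image (hGx_cont x).continuousOn
  set A : ℝ × ℝ → Set ℝ := fun x => {q | q ∈ Set.Icc 0 q_M ∧ G q x = M x} with hAdef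
  have hAne : ∀ x, (A x).Nonempty := by
    intro x
    obtain ⟨q, hq, hmax⟩ := isCompact_Icc.exists_isMaxOn (Set.nonempty_Icc.mpr hq_M.le)
      (hGx_cont x).continuousOn
    refine ⟨q, hq, le_antisymm (le_csSup (bdd x) ⟨q, hq, rfl⟩)
      (csSup_le ((Set.nonempty_Icc.mpr hq_M.le).image _) ?_)⟩
    rintro _ ⟨q', hq', rfl⟩
    exact hmax hq'
  have hAclosed : ∀ x, IsClosed (A x) := by
    intro x
    have : A x = Set.Icc 0 q_M ∩ (fun q => G q x) ⁻¹' {M x} := rfl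
    rw [this]
    exact isClosed_Icc.inter (isClosed_singleton.preimage (hGx_cont x))
  have hAbdd : ∀ x, BddBelow (A x) := fun x => ⟨0, fun q hq => hq.1.1⟩
  set ps : ℝ × ℝ → ℝ := fun x => sInf (A x) with hpsdef
  have hpsA : ∀ x, ps x ∈ A x := fun x => (hAclosed x).csInf_mem (hAne x) (hAbdd x)
  have hpsIcc : ∀ x, ps x ∈ Set.Icc (0:ℝ) q_M := fun x => (hpsA x).1
  have hpsMeas : Measurable ps := by
    apply measurable_of_Iic
    intro t
    by_cases ht : 0 ≤ t
    · have bdd' : ∀ x, BddAbove ((fun q => G q x) '' Set.Icc 0 (min t q_M)) := fun x =>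
        (bdd x).mono (Set.image_mono (Set.Icc_subset_Icc le_rfl (min_le_right _ _)))
      have hset : ps ⁻¹' Set.Iic t
          = {x | sSup ((fun q => G q x) '' Set.Icc 0 (min t q_M)) = M x} := by
        ext x
        simp only [Set.mem_preimage, Set.mem_Iic, Set.mem_setOf_eq]
        constructor
        · intro h
          have h1 : ps x ∈ Set.Icc 0 (min t q_M) := ⟨(hpsA x).1.1, le_min h (hpsA x).1.2⟩
          refine le_antisymm (csSup_le ⟨_, ⟨ps x, h1, rfl⟩⟩ ?_) ?_
          · rintro _ ⟨q', hq', rfl⟩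
            exact le_csSup (bdd x)
              ⟨q', Set.Icc_subset_Icc le_rfl (min_le_right _ _) hq', rfl⟩
          · exact le_trans (le_of_eq (hpsA x).2.symm)
              (le_csSup (bdd' x) ⟨ps x, h1, rfl⟩)
        · intro h
          obtain ⟨q, hq, hmax⟩ := isCompact_Icc.exists_isMaxOn
            (Set.nonempty_Icc.mpr (le_min ht hq_M.le)) (hGx_cont x).continuousOn
          have hq' : G q x = M x := by
            rw [← h]
            refine le_antisymm (le_csSup (bdd' x) ⟨q, hq, rfl⟩)
              (csSup_le ⟨_, ⟨q, hq, rfl⟩⟩ ?_)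
            rintro _ ⟨q'', hq'', rfl⟩
            exact hmax hq''
          have hqA : q ∈ A x := ⟨⟨hq.1, hq.2.trans (min_le_right _ _)⟩, hq'⟩
          exact (csInf_le (hAbdd x) hqA).trans (hq.2.trans (min_le_left _ _))
      rw [hset]
      exact measurableSet_eq_fun
        (aux_meas G hGc _ (le_min ht hq_M.le))
        hMmeas
    · have : ps ⁻¹' Set.Iic t = ∅ := by
        rw [Set.eq_empty_iff_forall_notMem]
        intro x hx
        exact ht ((hpsIcc x).1.trans hx)
      rw [this]
      exact MeasurableSet.empty
  have envbdd : ∀ x, BddAbove ((fun q => |G q x|) '' Set.Icc 0 q_M) :=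
    fun x => isCompact_Icc.bddAbove_image (hGx_cont x).abs.continuousOn
  have hint : ∀ p : ℝ × ℝ → ℝ, Measurable p → (∀ x, p x ∈ Set.Icc (0:ℝ) q_M) →
      Integrable (fun x => G (p x) x) (π₁.prod π₂) := by
    intro p hp hpI
    refine henv.mono'
      ((hGc.measurable.comp (hp.prodMk measurable_id)).aestronglyMeasurable)
      (Filter.Eventually.of_forall fun x => ?_)
    rw [Real.norm_eq_abs]
    exact le_csSup (envbdd x) ⟨p x, hpI x, rfl⟩
  refine ⟨ps, hpsMeas, hpsIcc, Filter.Eventually.of_forall fun x => (hpsA x).2, ?_⟩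
  intro p hp hpIcc
  refine integral_mono (hint p hp hpIcc) (hint ps hpsMeas hpsIcc) fun x => ?_
  show G (p x) x ≤ G (ps x) x
  calc G (p x) x ≤ M x := le_csSup (bdd x) ⟨p x, hpIcc x, rfl⟩
    _ = G (ps x) x := (hpsA x).2.symm
end
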